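/- The optimal solution map of the parametric least-distance problem is piecewise affine over critical regions: on each critical region Θ_A corresponding to an active set A satisfying LICQ, the map θ ↦ u*(θ) = -M_Aᵀ (M_A M_Aᵀ)⁻¹ d_A(θ) is affine in θ. -/

import Mathlib

open Matrix

/-- on the critical region `Θ_A` of an active set `A` satisfying LICQ,
the optimizer map `θ ↦ u*(θ) = -M_Aᵀ (M_A M_Aᵀ)⁻¹ d_A(θ)` is affine in `θ`. -/
theorem stmt_10 {p m n : ℕ}
    (M : Matrix (Fin m) (Fin n) ℝ) (d : (Fin p → ℝ) → Fin m → ℝ)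
    (hd : ∃ (D : Matrix (Fin m) (Fin p) ℝ) (d₀ : Fin m → ℝ), ∀ θ, d θ = D.mulVec θ + d₀)
    (A : Finset (Fin m))
    (MA : Matrix A (Fin n) ℝ) (hMA : MA = Matrix.of fun (i : A) j => M i.1 j)
    (hLICQ : LinearIndependent ℝ (fun i : A => M i.1))
    (lamA : (Fin p → ℝ) → A → ℝ)
    (hlam : ∀ θ, lamA θ = -((MA * MAᵀ)⁻¹.mulVec fun i : A => d θ i.1))
    (ustar : (Fin p → ℝ) → Fin n → ℝ)
    (hu : ∀ θ, ustar θ = -(MAᵀ.mulVec ((MA * MAᵀ)⁻¹.mulVec fun i : A => d θ i.1)))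
    (muBar : (Fin p → ℝ) → (Aᶜ : Finset (Fin m)) → ℝ)
    (hmu : ∀ θ, muBar θ = fun i : (Aᶜ : Finset (Fin m)) => d θ i.1 - M i.1 ⬝ᵥ ustar θ)
    (ΘA : Set (Fin p → ℝ)) (hΘA : ΘA = {θ | 0 ≤ lamA θ ∧ 0 ≤ muBar θ}) :
    ∃ (G : Matrix (Fin n) (Fin p) ℝ) (g₀ : Fin n → ℝ),
      ∀ θ ∈ ΘA, ustar θ = G.mulVec θ + g₀ := by
  obtain ⟨D, d₀, hD⟩ := hd
  set DA : Matrix A (Fin p) ℝ := Matrix.of fun (i : A) j => D i.1 j with hDA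
  set e₀ : A → ℝ := fun i : A => d₀ i.1 with he₀
  refine ⟨-(MAᵀ * (MA * MAᵀ)⁻¹ * DA), -(MAᵀ.mulVec ((MA * MAᵀ)⁻¹.mulVec e₀)), fun θ _ => ?_⟩
  have hdA : (fun i : A => d θ i.1) = DA.mulVec θ + e₀ := by
    funext i
    simp [hD θ, DA, e₀, mulVec, dotProduct]
  rw [hu θ, hdA, Matrix.mulVec_add, Matrix.mulVec_add, neg_add, Matrix.neg_mulVec,
    ← Matrix.mulVec_mulVec, ← Matrix.mulVec_mulVec]
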